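/- If every identity Y-sequence d ∈ Υ belongs to WDom_Υ(𝔘), then Π̃ = 𝔘̂ (the generalized module of identities coincides with the subgroup generated by the images of the insertions). -/

import Mathlib

universe u

namespace Wh

variable {X : Type u}

/-- The set of symbols `(ᵘr)^ε` for a presentation with relators `rels`:
`u` is a word of the free group, `r` a relator and `eps` the sign (`true` for `+1`). -/
structure Sym (X : Type u) (rels : Set (FreeGroup X)) where
  u : FreeGroup X
  r : rels
  eps : Bool

variable {rels : Set (FreeGroup X)}

/-- The formal inverse `(ᵘr)^{-ε}` of a symbol `(ᵘr)^ε`. -/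
def Sym.symInv (a : Sym X rels) : Sym X rels := ⟨a.u, a.r, !a.eps⟩

/-- `θ((ᵘr)^ε) = u r^ε u⁻¹`. -/
def Sym.theta (a : Sym X rels) : FreeGroup X :=
  a.u * (if a.eps then (a.r : FreeGroup X) else (a.r : FreeGroup X)⁻¹) * a.u⁻¹

/-- The conjugate `ᵛ((ᵘr)^ε) = (^{vu}r)^ε`. -/
def Sym.conj (v : FreeGroup X) (a : Sym X rels) : Sym X rels := ⟨v * a.u, a.r, a.eps⟩

/-- The defining relations of the monoid `Υ` : `a ⬝ b = (^{θ(a)}b) ⬝ a`. -/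
def upsRel (rels : Set (FreeGroup X)) :
    FreeMonoid (Sym X rels) → FreeMonoid (Sym X rels) → Prop := fun x y =>
  ∃ a b : Sym X rels, x = FreeMonoid.of a * FreeMonoid.of b ∧
    y = FreeMonoid.of (Sym.conj (Sym.theta a) b) * FreeMonoid.of a

/-- The congruence on the free monoid on `Z` generated by the defining relations of `Υ`. -/
def upsCon (rels : Set (FreeGroup X)) : Con (FreeMonoid (Sym X rels)) := conGen (upsRel rels)

/-- The monoid `Υ` presented on `Z` by the relations `a ⬝ b = (^{θ(a)}b) ⬝ a`. -/
abbrev Ups (rels : Set (FreeGroup X)) := (upsCon rels).Quotient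

/-- The canonical epimorphism `σ : FM(Z) → Υ`. -/
def sigma (rels : Set (FreeGroup X)) : FreeMonoid (Sym X rels) →* Ups rels := (upsCon rels).mk'

/-- The submonoid `𝔘` of `Υ` generated by the elements `σ(a)σ(a⁻¹)`, `a ∈ Z`. -/
def UU (rels : Set (FreeGroup X)) : Submonoid (Ups rels) :=
  Submonoid.closure
    {x | ∃ a : Sym X rels, x = sigma rels (FreeMonoid.of a * FreeMonoid.of a.symInv)}

/-- The monoid homomorphism `θ̄ : Υ → F` induced by `θ`. -/
def thetaBar (rels : Set (FreeGroup X)) : Ups rels →* FreeGroup X :=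
  (upsCon rels).lift (FreeMonoid.lift Sym.theta) (by
    apply Con.conGen_le.2
    rintro x y ⟨a, b, rfl, rfl⟩
    simp only [Con.ker_rel, map_mul, FreeMonoid.lift_eval_of]
    simp only [Sym.theta, Sym.conj]
    group)

/-- The relators of the group `𝒢(Υ)` : `a ⬝ b ⬝ ι((^{θ(a)}b) ⬝ a)`. -/
def grels (rels : Set (FreeGroup X)) : Set (FreeGroup (Sym X rels)) :=
  {x | ∃ a b : Sym X rels, x = FreeGroup.of a * FreeGroup.of b *
      (FreeGroup.of (Sym.conj (Sym.theta a) b) * FreeGroup.of a)⁻¹}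

/-- The universal enveloping group `𝒢(Υ)`. -/
abbrev GUps (rels : Set (FreeGroup X)) := PresentedGroup (grels rels)

/-- The canonical monoid homomorphism `μ : Υ → 𝒢(Υ)`. -/
def mu (rels : Set (FreeGroup X)) : Ups rels →* GUps rels :=
  (upsCon rels).lift (FreeMonoid.lift fun a => (PresentedGroup.of a : GUps rels)) (by
    apply Con.conGen_le.2
    rintro x y ⟨a, b, rfl, rfl⟩
    simp only [Con.ker_rel, map_mul, FreeMonoid.lift_eval_of]
    have h2 : (QuotientGroup.mk (FreeGroup.of a * FreeGroup.of b *
        (FreeGroup.of (Sym.conj (Sym.theta a) b) * FreeGroup.of a)⁻¹) : GUps rels) = 1 :=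
      (QuotientGroup.eq_one_iff _).2 (Subgroup.subset_normalClosure ⟨a, b, rfl⟩)
    rw [QuotientGroup.mk_mul, QuotientGroup.mk_inv, QuotientGroup.mk_mul,
      QuotientGroup.mk_mul, mul_inv_eq_one] at h2
    exact h2)

/-- The subgroup `𝔘̂` of `𝒢(Υ)` generated by `μ(𝔘)`. -/
def UUhat (rels : Set (FreeGroup X)) : Subgroup (GUps rels) :=
  Subgroup.closure (mu rels '' (UU rels : Set (Ups rels)))

/-- The group homomorphism `θ̃ : 𝒢(Υ) → F` induced by `θ`. -/
def thetaTilde (rels : Set (FreeGroup X)) : GUps rels →* FreeGroup X :=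
  PresentedGroup.toGroup (f := Sym.theta) (by
    rintro x ⟨a, b, rfl⟩
    simp only [map_mul, map_inv, FreeGroup.lift_apply_of]
    simp only [Sym.theta, Sym.conj]
    group)

/-- Peiffer equivalence `~_𝔘` on `Υ` : the equivalence relation generated by the pairs
`(x, x ⬝ σ(a)σ(a⁻¹))`. -/
def peifferEquiv (rels : Set (FreeGroup X)) : Ups rels → Ups rels → Prop :=
  Relation.EqvGen fun x y => ∃ a : Sym X rels,
    y = x * sigma rels (FreeMonoid.of a * FreeMonoid.of a.symInv)

/-- The weak dominion of a submonoid `U` of a monoid `S`. -/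
def WDom (S : Type u) [Monoid S] (U : Submonoid S) : Set S :=
  {d | ∀ (G : Type u) [Group G] (f g : S →* G), (∀ u ∈ U, f u = g u) → f d = g d}

/-- The `F`-action on `𝒢(Υ)` determined by `ʷ(μσ(a)) = μσ(ʷa)`. -/
def actF (rels : Set (FreeGroup X)) (w : FreeGroup X) : GUps rels →* GUps rels :=
  PresentedGroup.toGroup (f := fun a => (PresentedGroup.of (Sym.conj w a) : GUps rels)) (by
    rintro x ⟨a, b, rfl⟩
    simp only [map_mul, map_inv, FreeGroup.lift_apply_of]
    have key : Sym.conj w (Sym.conj (Sym.theta a) b) =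
        Sym.conj (Sym.theta (Sym.conj w a)) (Sym.conj w b) := by
      rcases a with ⟨u, r, eps⟩
      cases eps <;> simp [Sym.conj, Sym.theta, mul_assoc]
    rw [key]
    have h2 : (QuotientGroup.mk (FreeGroup.of (Sym.conj w a) * FreeGroup.of (Sym.conj w b) *
        (FreeGroup.of (Sym.conj (Sym.theta (Sym.conj w a)) (Sym.conj w b)) *
          FreeGroup.of (Sym.conj w a))⁻¹) : GUps rels) = 1 :=
      (QuotientGroup.eq_one_iff _).2 (Subgroup.subset_normalClosure ⟨_, _, rfl⟩)
    rw [QuotientGroup.mk_mul, QuotientGroup.mk_inv, QuotientGroup.mk_mul,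
      QuotientGroup.mk_mul] at h2
    exact h2)

/-! ### Auxiliary lemmas -/

lemma sym_symInv_symInv (a : Sym X rels) : a.symInv.symInv = a := by
  cases a; simp [Sym.symInv]

lemma sym_theta_symInv (a : Sym X rels) : a.symInv.theta = a.theta⁻¹ := by
  cases a with
  | mk u r e => cases e <;> simp [Sym.symInv, Sym.theta] <;> group

lemma sym_conj_symInv (w : FreeGroup X) (a : Sym X rels) :
    Sym.conj w a.symInv = (Sym.conj w a).symInv := rfl

lemma sym_conj_conj (w v : FreeGroup X) (a : Sym X rels) :
    Sym.conj w (Sym.conj v a) = Sym.conj (w * v) a := by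
  simp [Sym.conj, mul_assoc]

lemma sym_conj_one (a : Sym X rels) : Sym.conj 1 a = a := by
  cases a; simp [Sym.conj]

lemma mu_sigma_of (a : Sym X rels) :
    mu rels (sigma rels (FreeMonoid.of a)) = PresentedGroup.of a := by
  exact (Con.lift_mk' _ _).trans (FreeMonoid.lift_eval_of _ _)

lemma thetaBar_sigma_of (a : Sym X rels) :
    thetaBar rels (sigma rels (FreeMonoid.of a)) = a.theta := by
  exact (Con.lift_mk' _ _).trans (FreeMonoid.lift_eval_of _ _)

lemma thetaTilde_of (a : Sym X rels) :
    thetaTilde rels (PresentedGroup.of a) = a.theta :=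
  PresentedGroup.toGroup.of _

lemma actF_of (w : FreeGroup X) (a : Sym X rels) :
    actF rels w (PresentedGroup.of a) = PresentedGroup.of (Sym.conj w a) :=
  PresentedGroup.toGroup.of _

lemma actF_actF (w v : FreeGroup X) (x : GUps rels) :
    actF rels w (actF rels v x) = actF rels (w * v) x := by
  have : (actF rels w).comp (actF rels v) = actF rels (w * v) := by
    apply PresentedGroup.ext
    intro a
    simp [actF_of, sym_conj_conj]
  exact DFunLike.congr_fun this x

lemma actF_one (x : GUps rels) : actF rels 1 x = x := by
  have : actF rels 1 = MonoidHom.id (GUps rels) := by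
    apply PresentedGroup.ext
    intro a
    simp [actF_of, sym_conj_one]
  rw [this]; rfl

/-- The defining relation in `𝒢(Υ)` : `of a * of b = of (^{θ(a)}b) * of a`. -/
lemma gups_of_mul_of (a b : Sym X rels) :
    (PresentedGroup.of a : GUps rels) * PresentedGroup.of b =
      PresentedGroup.of (Sym.conj a.theta b) * PresentedGroup.of a := by
  have h2 : (QuotientGroup.mk (FreeGroup.of a * FreeGroup.of b *
      (FreeGroup.of (Sym.conj (Sym.theta a) b) * FreeGroup.of a)⁻¹) : GUps rels) = 1 :=
    (QuotientGroup.eq_one_iff _).2 (Subgroup.subset_normalClosure ⟨a, b, rfl⟩)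
  rw [QuotientGroup.mk_mul, QuotientGroup.mk_inv, QuotientGroup.mk_mul,
    QuotientGroup.mk_mul, mul_inv_eq_one] at h2
  exact h2

/-- Conjugation by `of a` in `𝒢(Υ)` is the action of `θ(a)`. -/
lemma conj_of_eq_actF (a : Sym X rels) (x : GUps rels) :
    PresentedGroup.of a * x * (PresentedGroup.of a)⁻¹ = actF rels a.theta x := by
  have key : (MulAut.conj (PresentedGroup.of a : GUps rels)).toMonoidHom =
      actF rels a.theta := by
    apply PresentedGroup.ext
    intro b
    show PresentedGroup.of a * PresentedGroup.of b * (PresentedGroup.of a)⁻¹ =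
      actF rels a.theta (PresentedGroup.of b)
    rw [actF_of, gups_of_mul_of, mul_inv_cancel_right]
  exact DFunLike.congr_fun key x

/-- `θ̃ ∘ μ = θ̄`. -/
lemma thetaTilde_mu (s : Ups rels) :
    thetaTilde rels (mu rels s) = thetaBar rels s := by
  obtain ⟨x, rfl⟩ := Con.mk'_surjective s
  show thetaTilde rels (mu rels (sigma rels x)) = thetaBar rels (sigma rels x)
  have h1 : mu rels (sigma rels x) =
      FreeMonoid.lift (fun a => (PresentedGroup.of a : GUps rels)) x :=
    Con.lift_mk' _ _
  have h2 : thetaBar rels (sigma rels x) = FreeMonoid.lift Sym.theta x :=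
    Con.lift_mk' _ _
  rw [h1, h2]
  have key : (thetaTilde rels).comp
      (FreeMonoid.lift (fun a => (PresentedGroup.of a : GUps rels))) =
      FreeMonoid.lift Sym.theta := by
    apply FreeMonoid.hom_eq
    intro a
    simp [thetaTilde_of]
  exact DFunLike.congr_fun key x

/-- `𝔘̂` is stable under the `F`-action. -/
lemma actF_mem_UUhat (w : FreeGroup X) {x : GUps rels} (hx : x ∈ UUhat rels) :
    actF rels w x ∈ UUhat rels := by
  induction hx using Subgroup.closure_induction with
  | mem y hy =>
    obtain ⟨u, hu, rfl⟩ := hy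
    induction hu using Submonoid.closure_induction with
    | mem v hv =>
      obtain ⟨a, rfl⟩ := hv
      have : actF rels w (mu rels (sigma rels (FreeMonoid.of a * FreeMonoid.of a.symInv))) =
          mu rels (sigma rels (FreeMonoid.of (Sym.conj w a) *
            FreeMonoid.of (Sym.conj w a).symInv)) := by
        simp only [map_mul, mu_sigma_of, actF_of, sym_conj_symInv]
      rw [this]
      exact Subgroup.subset_closure ⟨_, Submonoid.subset_closure ⟨_, rfl⟩, rfl⟩
    | one => simp only [map_one]; exact one_mem _
    | mul p q hp hq ihp ihq =>
      rw [map_mul, map_mul]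
      exact mul_mem ihp ihq
  | one => simp only [map_one]; exact one_mem _
  | mul p q hp hq ihp ihq => rw [map_mul]; exact mul_mem ihp ihq
  | inv p hp ihp => rw [map_inv]; exact inv_mem ihp

/-- Every inner automorphism of `𝒢(Υ)` is given by the `F`-action. -/
lemma conj_eq_actF (g : GUps rels) : ∃ w : FreeGroup X,
    ∀ x : GUps rels, g * x * g⁻¹ = actF rels w x := by
  refine PresentedGroup.induction_on
    (C := fun g => ∃ w : FreeGroup X, ∀ x : GUps rels, g * x * g⁻¹ = actF rels w x) g ?_
  intro z
  induction z using FreeGroup.induction_on with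
  | C1 =>
    refine ⟨1, fun x => ?_⟩
    rw [map_one, actF_one, one_mul, inv_one, mul_one]
  | of a => exact ⟨a.theta, fun x => conj_of_eq_actF a x⟩
  | inv_of a _ =>
    refine ⟨a.theta⁻¹, fun x => ?_⟩
    have hmk : (PresentedGroup.mk (grels rels) ((FreeGroup.of a : FreeGroup (Sym X rels))⁻¹) :
        GUps rels) = (PresentedGroup.of a : GUps rels)⁻¹ := map_inv _ _
    rw [hmk]
    have key := conj_of_eq_actF a (actF rels a.theta⁻¹ x)
    rw [actF_actF, mul_inv_cancel, actF_one] at key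
    rw [inv_inv]
    conv_lhs => rw [← key]
    group
  | mul y z ihy ihz =>
    obtain ⟨w₁, h₁⟩ := ihy
    obtain ⟨w₂, h₂⟩ := ihz
    refine ⟨w₁ * w₂, fun x => ?_⟩
    rw [map_mul, ← actF_actF, ← h₂ x, ← h₁]
    group

lemma normal_UUhat : (UUhat rels).Normal := by
  constructor
  intro n hn g
  obtain ⟨w, hw⟩ := conj_eq_actF g
  rw [hw]
  exact actF_mem_UUhat w hn

lemma UU_le_mker : UU rels ≤ MonoidHom.mker (thetaBar rels) := by
  apply Submonoid.closure_le.2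
  rintro _ ⟨a, rfl⟩
  show thetaBar rels _ = 1
  simp only [map_mul, thetaBar_sigma_of, sym_theta_symInv, mul_inv_cancel]

/-- (ii) ⇒ (iii) of Theorem `wdom`: if every identity `Y`-sequence lies in the weak
dominion of `𝔘`, then the generalized module of identities `Π̃ = ker θ̃` equals `𝔘̂`. -/
theorem ker_thetaTilde_eq_UUhat (rels : Set (FreeGroup X))
    (h : ∀ d ∈ MonoidHom.mker (thetaBar rels), d ∈ WDom (Ups rels) (UU rels)) :
    (thetaTilde rels).ker = UUhat rels := by
  haveI : (UUhat rels).Normal := normal_UUhat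
  -- the easy inclusion `𝔘̂ ⊆ ker θ̃`
  have easy : UUhat rels ≤ (thetaTilde rels).ker := by
    apply Subgroup.closure_le _ |>.2
    rintro _ ⟨u, hu, rfl⟩
    show thetaTilde rels (mu rels u) = 1
    rw [thetaTilde_mu]
    exact UU_le_mker hu
  refine le_antisymm ?_ easy
  -- surjectivity of `π ∘ μ` onto `𝒢(Υ)/𝔘̂`
  have surj : ∀ x : GUps rels, ∃ s : Ups rels,
      QuotientGroup.mk' (UUhat rels) x = QuotientGroup.mk' (UUhat rels) (mu rels s) := by
    intro x
    refine PresentedGroup.induction_on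
      (C := fun x => ∃ s : Ups rels, QuotientGroup.mk' (UUhat rels) x =
        QuotientGroup.mk' (UUhat rels) (mu rels s)) x ?_
    intro z
    induction z using FreeGroup.induction_on with
    | C1 => exact ⟨1, by simp⟩
    | of a =>
      exact ⟨sigma rels (FreeMonoid.of a), by rw [mu_sigma_of]; rfl⟩
    | inv_of a _ =>
      refine ⟨sigma rels (FreeMonoid.of a.symInv), ?_⟩
      rw [mu_sigma_of]
      have hmk : (PresentedGroup.mk (grels rels) ((FreeGroup.of a : FreeGroup (Sym X rels))⁻¹) :
          GUps rels) = (PresentedGroup.of a : GUps rels)⁻¹ := map_inv _ _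
      rw [hmk]
      apply (QuotientGroup.mk'_eq_mk' (N := UUhat rels)).2
      refine ⟨PresentedGroup.of a * PresentedGroup.of a.symInv, ?_, by group⟩
      have : (PresentedGroup.of a : GUps rels) * PresentedGroup.of a.symInv =
          mu rels (sigma rels (FreeMonoid.of a * FreeMonoid.of a.symInv)) := by
        rw [map_mul, map_mul, mu_sigma_of, mu_sigma_of]
      rw [this]
      exact Subgroup.subset_closure ⟨_, Submonoid.subset_closure ⟨a, rfl⟩, rfl⟩
    | mul y z ihy ihz =>
      obtain ⟨s, hs⟩ := ihy
      obtain ⟨t, ht⟩ := ihz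
      exact ⟨s * t, by rw [map_mul, map_mul, map_mul, map_mul, hs, ht]⟩
  -- the hard inclusion
  intro x hx
  obtain ⟨s, hs⟩ := surj x
  -- `x⁻¹ * μ(s) ∈ 𝔘̂`
  have hmem : x⁻¹ * mu rels s ∈ UUhat rels := by
    have := (QuotientGroup.mk'_eq_mk' (N := UUhat rels)).1 hs
    obtain ⟨z, hz, hzx⟩ := this
    have : x⁻¹ * mu rels s = z := by rw [← hzx]; group
    rw [this]; exact hz
  -- hence `θ̄(s) = 1`
  have hth : s ∈ MonoidHom.mker (thetaBar rels) := by
    have h1 : thetaTilde rels (x⁻¹ * mu rels s) = 1 := easy hmem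
    have h2 : thetaTilde rels x = 1 := hx
    rw [map_mul, map_inv, h2, inv_one, one_mul, thetaTilde_mu] at h1
    exact h1
  -- apply the weak dominion hypothesis with `G = 𝒢(Υ)/𝔘̂`, `f = π ∘ μ`, `g = 1`
  have hdom := h s hth
  have key : (QuotientGroup.mk' (UUhat rels)).comp (mu rels) s = 1 := by
    have := hdom (GUps rels ⧸ UUhat rels)
      ((QuotientGroup.mk' (UUhat rels)).comp (mu rels)) 1 ?_
    · rw [this]; rfl
    · intro u hu
      have : mu rels u ∈ UUhat rels :=
        Subgroup.subset_closure ⟨u, hu, rfl⟩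
      show QuotientGroup.mk' (UUhat rels) (mu rels u) = 1
      rw [← (QuotientGroup.mk' (UUhat rels)).mem_ker, QuotientGroup.ker_mk']
      exact this
  -- conclude `x ∈ 𝔘̂`
  have hmus : mu rels s ∈ UUhat rels := by
    have : QuotientGroup.mk' (UUhat rels) (mu rels s) = 1 := key
    rwa [← (QuotientGroup.mk' (UUhat rels)).mem_ker, QuotientGroup.ker_mk'] at this
  have : x = mu rels s * (x⁻¹ * mu rels s)⁻¹ := by group
  rw [this]
  exact mul_mem hmus (inv_mem hmem)

end Wh
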